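/- For all real n > 0 and a with 1 ≤ a ≤ n/e, the variance-type sum 2·Σ_{i=1}^{∞} n^2/(a·e^{i/a} + n)^4 is bounded above by C·(a/n^2)·log(n/a) for a universal constant C > 0. -/

import Mathlib

/-- For `1 ≤ a ≤ n/e`, `2·Σ_{i≥1} n²/(a e^{i/a}+n)⁴ ≤ C·(a/n²)·log(n/a)` for a universal
constant `C > 0`. -/
theorem stmt7 :
    ∃ C : ℝ, 0 < C ∧ ∀ n a : ℝ, 1 ≤ a → a ≤ n / Real.exp 1 →
      2 * ∑' i : ℕ, n ^ 2 / (a * Real.exp (((i : ℝ) + 1) / a) + n) ^ 4 ≤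
        C * (a / n ^ 2) * Real.log (n / a) := by
  refine ⟨50, by norm_num, ?_⟩
  intro n a ha hae
  have ha0 : (0:ℝ) < a := lt_of_lt_of_le one_pos ha
  have he1 : (0:ℝ) < Real.exp 1 := Real.exp_pos 1
  have han : a * Real.exp 1 ≤ n := (le_div_iff₀ he1).mp hae
  have hn0 : 0 < n := lt_of_lt_of_le (by positivity) han
  have hna : Real.exp 1 ≤ n / a := (le_div_iff₀ ha0).mpr (by linarith [mul_comm a (Real.exp 1)])
  set L := Real.log (n / a) with hLdef
  have hL1 : 1 ≤ L := (Real.le_log_iff_exp_le (by positivity)).mpr hna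
  set f : ℕ → ℝ := fun i => n ^ 2 / (a * Real.exp (((i : ℝ) + 1) / a) + n) ^ 4 with hf
  have hfnn : ∀ i, 0 ≤ f i := fun i => by rw [hf]; positivity
  -- summability
  have hr : Real.exp (-(4 / a)) < 1 := Real.exp_lt_one_iff.mpr (neg_lt_zero.mpr (by positivity))
  have key : ∀ i : ℕ, f i ≤ n ^ 2 / a ^ 4 * Real.exp (-(4 / a)) ^ i := by
    intro i
    have hE : Real.exp (-(4 / a)) ^ i = Real.exp (-(4 * i / a)) := by
      rw [← Real.exp_nat_mul]; ring_nf
    have hgrow : a ^ 4 * Real.exp (4 * i / a) ≤ (a * Real.exp (((i : ℝ) + 1) / a) + n) ^ 4 := by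
      have hmono : (4 : ℝ) * i / a ≤ 4 * (((i : ℝ) + 1) / a) := by
        have h4 : (4:ℝ) * i ≤ 4 * ((i:ℝ) + 1) := by linarith [Nat.cast_nonneg (α := ℝ) i]
        calc (4:ℝ) * i / a ≤ 4 * ((i:ℝ) + 1) / a := by gcongr
          _ = 4 * (((i:ℝ) + 1) / a) := by ring
      have h1 : a ^ 4 * Real.exp (4 * i / a) ≤ (a * Real.exp (((i : ℝ) + 1) / a)) ^ 4 := by
        rw [mul_pow, ← Real.exp_nat_mul]
        push_cast
        exact mul_le_mul_of_nonneg_left (Real.exp_le_exp.mpr hmono) (by positivity)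
      have h2 : (a * Real.exp (((i : ℝ) + 1) / a)) ^ 4
          ≤ (a * Real.exp (((i : ℝ) + 1) / a) + n) ^ 4 :=
        pow_le_pow_left₀ (by positivity) (le_add_of_nonneg_right hn0.le) 4
      linarith
    rw [hf]
    calc n ^ 2 / (a * Real.exp (((i : ℝ) + 1) / a) + n) ^ 4
        ≤ n ^ 2 / (a ^ 4 * Real.exp (4 * i / a)) := by gcongr
      _ = n ^ 2 / a ^ 4 * Real.exp (-(4 / a)) ^ i := by
          rw [hE, Real.exp_neg]; field_simp
  have hsumf : Summable f :=
    Summable.of_nonneg_of_le hfnn key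
      ((summable_geometric_of_lt_one (Real.exp_pos _).le hr).mul_left _)
  set N : ℕ := ⌈a * L⌉₊ with hN
  have hsplit := Summable.sum_add_tsum_nat_add (f := f) N hsumf
  -- head bound
  have hhead : ∑ i ∈ Finset.range N, f i ≤ 2 * a * L / n ^ 2 := by
    have h1 : ∀ i ∈ Finset.range N, f i ≤ 1 / n ^ 2 := by
      intro i _
      rw [hf]
      have hd : n ^ 4 ≤ (a * Real.exp (((i : ℝ) + 1) / a) + n) ^ 4 := by
        have hep := Real.exp_pos (((i : ℝ) + 1) / a)
        have hle : n ≤ a * Real.exp (((i : ℝ) + 1) / a) + n := by nlinarith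
        exact pow_le_pow_left₀ hn0.le hle 4
      calc n ^ 2 / (a * Real.exp (((i : ℝ) + 1) / a) + n) ^ 4
          ≤ n ^ 2 / n ^ 4 := by gcongr
        _ = 1 / n ^ 2 := by field_simp
    calc ∑ i ∈ Finset.range N, f i ≤ ∑ _i ∈ Finset.range N, 1 / n ^ 2 := Finset.sum_le_sum h1
      _ = N * (1 / n ^ 2) := by rw [Finset.sum_const, Finset.card_range, nsmul_eq_mul]
      _ ≤ (2 * a * L) * (1 / n ^ 2) := by
          have hceil : (N : ℝ) < a * L + 1 := Nat.ceil_lt_add_one (by positivity)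
          have haL : (1 : ℝ) ≤ a * L := by nlinarith
          have hNle : (N : ℝ) ≤ 2 * a * L := by linarith
          gcongr
      _ = 2 * a * L / n ^ 2 := by ring
  -- tail bound
  have hs : Real.exp (-(3 / a)) < 1 := Real.exp_lt_one_iff.mpr (neg_lt_zero.mpr (by positivity))
  have he3 : Real.exp 3 ≤ 21 := by
    have h := Real.exp_one_lt_d9
    have h3 : Real.exp 3 = Real.exp 1 ^ 3 := by
      rw [← Real.exp_nat_mul]; norm_num
    have hb : Real.exp 1 ^ 3 ≤ (2.7182818286:ℝ) ^ 3 :=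
      pow_le_pow_left₀ (Real.exp_pos 1).le h.le 3
    rw [h3]
    calc Real.exp 1 ^ 3 ≤ (2.7182818286:ℝ) ^ 3 := hb
      _ ≤ 21 := by norm_num
  have hgap : 1 / (7 * a) ≤ 1 - Real.exp (-(3 / a)) := by
    have h1 : 3 / a + 1 ≤ Real.exp (3 / a) := Real.add_one_le_exp _
    have h2 : Real.exp (-(3 / a)) = (Real.exp (3 / a))⁻¹ := Real.exp_neg _
    have h3 : Real.exp (-3) ≤ Real.exp (-(3 / a)) := by
      apply Real.exp_le_exp.mpr
      rw [neg_le_neg_iff, div_le_iff₀ ha0]; nlinarith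
    have h4 : (1:ℝ) / 21 ≤ Real.exp (-3) := by
      rw [Real.exp_neg, one_div, inv_le_inv₀ (by positivity) (by positivity)]
      exact he3
    have h5 : (3 / a) * Real.exp (-(3 / a)) ≤ 1 - Real.exp (-(3 / a)) := by
      rw [h2]
      have hep : 0 < Real.exp (3 / a) := Real.exp_pos _
      have := mul_le_mul_of_nonneg_right h1 (le_of_lt (inv_pos.mpr hep))
      rw [mul_inv_cancel₀ (ne_of_gt hep)] at this
      have expand : (3 / a + 1) * (Real.exp (3 / a))⁻¹
          = (Real.exp (3 / a))⁻¹ + 3 / a * (Real.exp (3 / a))⁻¹ := by ring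
      rw [expand] at this
      linarith
    have h6 : 1 / (7 * a) ≤ (3 / a) * Real.exp (-(3 / a)) := by
      calc 1 / (7 * a) = (3 / a) * (1 / 21) := by field_simp; ring
        _ ≤ (3 / a) * Real.exp (-3) := by gcongr
        _ ≤ (3 / a) * Real.exp (-(3 / a)) := by gcongr
    linarith
  have htailterm : ∀ i : ℕ, f (i + N) ≤ 1 / n ^ 2 * Real.exp (-(3 / a)) ^ i := by
    intro i
    have hEN : n / a ≤ Real.exp ((N : ℝ) / a) := by
      have h1 : a * L ≤ (N : ℝ) := Nat.le_ceil _
      have h2 : L ≤ (N : ℝ) / a := (le_div_iff₀ ha0).mpr (by linarith [mul_comm a L])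
      calc n / a = Real.exp L := (Real.exp_log (by positivity)).symm
        _ ≤ Real.exp ((N : ℝ) / a) := Real.exp_le_exp.mpr h2
    have hX : n * Real.exp (((i : ℝ) + 1) / a) ≤ a * Real.exp ((((i + N : ℕ) : ℝ) + 1) / a) := by
      have hsplit2 : ((((i + N : ℕ) : ℝ)) + 1) / a = (N : ℝ) / a + ((i : ℝ) + 1) / a := by
        push_cast; ring
      rw [hsplit2, Real.exp_add, ← mul_assoc]
      have hna2 : n ≤ a * Real.exp ((N : ℝ) / a) := by
        rw [← div_le_iff₀' ha0]; exact hEN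
      exact mul_le_mul_of_nonneg_right hna2 (Real.exp_pos _).le
    have hD4 : n ^ 4 * Real.exp (((i : ℝ) + 1) / a) ^ 3
        ≤ (a * Real.exp ((((i + N : ℕ) : ℝ) + 1) / a) + n) ^ 4 := by
      set E := Real.exp (((i : ℝ) + 1) / a) with hEdef
      have hE0 : 0 < E := Real.exp_pos _
      have hXnn : 0 ≤ n * E := by positivity
      have hDge : n * E + n ≤ a * Real.exp ((((i + N : ℕ) : ℝ) + 1) / a) + n := by linarith
      calc n ^ 4 * E ^ 3 = (n * E) ^ 3 * n := by ring
        _ ≤ (n * E + n) ^ 3 * (n * E + n) := by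
            apply mul_le_mul
            · apply pow_le_pow_left₀ hXnn; linarith
            · linarith [mul_pos hn0 hE0]
            · exact hn0.le
            · positivity
        _ = (n * E + n) ^ 4 := by ring
        _ ≤ (a * Real.exp ((((i + N : ℕ) : ℝ) + 1) / a) + n) ^ 4 :=
            pow_le_pow_left₀ (by positivity) hDge 4
    have hexp3 : Real.exp (-(3 / a)) ^ i = Real.exp (-(3 * i / a)) := by
      rw [← Real.exp_nat_mul]; ring_nf
    have hE3 : Real.exp (((i : ℝ) + 1) / a) ^ 3 = Real.exp (3 * ((i : ℝ) + 1) / a) := by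
      rw [← Real.exp_nat_mul]; ring_nf
    have hmono2 : n ^ 4 * Real.exp (3 * (i : ℝ) / a) ≤ n ^ 4 * Real.exp (3 * ((i : ℝ) + 1) / a) := by
      have : (3:ℝ) * i / a ≤ 3 * ((i:ℝ) + 1) / a := by
        gcongr
        linarith
      exact mul_le_mul_of_nonneg_left (Real.exp_le_exp.mpr this) (by positivity)
    calc f (i + N) = n ^ 2 / (a * Real.exp ((((i + N : ℕ) : ℝ) + 1) / a) + n) ^ 4 := by rw [hf]
      _ ≤ n ^ 2 / (n ^ 4 * Real.exp (((i : ℝ) + 1) / a) ^ 3) := by gcongr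
      _ = n ^ 2 / (n ^ 4 * Real.exp (3 * ((i : ℝ) + 1) / a)) := by rw [hE3]
      _ ≤ n ^ 2 / (n ^ 4 * Real.exp (3 * (i : ℝ) / a)) := by gcongr
      _ = 1 / n ^ 2 * Real.exp (-(3 / a)) ^ i := by
          rw [hexp3, Real.exp_neg]
          field_simp
  have htail : ∑' i : ℕ, f (i + N) ≤ 7 * a / n ^ 2 := by
    have hg : Summable (fun i : ℕ => 1 / n ^ 2 * Real.exp (-(3 / a)) ^ i) :=
      (summable_geometric_of_lt_one (Real.exp_pos _).le hs).mul_left _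
    have h1 : ∑' i : ℕ, f (i + N) ≤ ∑' i : ℕ, 1 / n ^ 2 * Real.exp (-(3 / a)) ^ i :=
      Summable.tsum_le_tsum htailterm ((summable_nat_add_iff N).mpr hsumf) hg
    have h2 : ∑' i : ℕ, 1 / n ^ 2 * Real.exp (-(3 / a)) ^ i
        = 1 / n ^ 2 * (1 - Real.exp (-(3 / a)))⁻¹ := by
      rw [tsum_mul_left, tsum_geometric_of_lt_one (Real.exp_pos _).le hs]
    have hgap0 : (0:ℝ) < 1 - Real.exp (-(3 / a)) := by
      have : (0:ℝ) < 1 / (7 * a) := by positivity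
      linarith
    have h3 : (1 - Real.exp (-(3 / a)))⁻¹ ≤ 7 * a := by
      rw [inv_le_comm₀ hgap0 (by positivity)]
      calc (7 * a)⁻¹ = 1 / (7 * a) := (one_div _).symm
        _ ≤ 1 - Real.exp (-(3 / a)) := hgap
    calc ∑' i : ℕ, f (i + N) ≤ 1 / n ^ 2 * (1 - Real.exp (-(3 / a)))⁻¹ := h2 ▸ h1
      _ ≤ 1 / n ^ 2 * (7 * a) := by gcongr
      _ = 7 * a / n ^ 2 := by ring
  have hfinal : ∑' i : ℕ, f i ≤ 9 * a * L / n ^ 2 := by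
    rw [← hsplit]
    have h7 : 7 * a / n ^ 2 ≤ 7 * a * L / n ^ 2 := by
      gcongr ?_ / n ^ 2
      nlinarith
    calc ∑ i ∈ Finset.range N, f i + ∑' i : ℕ, f (i + N)
        ≤ 2 * a * L / n ^ 2 + 7 * a * L / n ^ 2 := add_le_add hhead (le_trans htail h7)
      _ = 9 * a * L / n ^ 2 := by ring
  calc 2 * ∑' i : ℕ, f i ≤ 2 * (9 * a * L / n ^ 2) := by linarith
    _ ≤ 50 * (a / n ^ 2) * L := by
        have : 2 * (9 * a * L / n ^ 2) = 18 * ((a / n ^ 2) * L) := by ring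
        rw [this]
        have hpos : 0 ≤ (a / n ^ 2) * L := by positivity
        nlinarith
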